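/- Let p be a Markov chain on finite state space S and S̃ ⊆ S. Define the induced chain p̃ on S̃ by p̃(x,y) := Pˣ(X_{τ⁺_{S̃}} = y), the probability that the first return to S̃ from x lands at y. Then for all x, y ∈ S̃, the probability of hitting y before returning to x is the same in both chains: Pˣ(τ_y < τ⁺_x) = P̃ˣ(τ_y < τ⁺_x). -/

import Mathlib

def pathProb {S : Type*} (p : S → S → ℝ) : List S → ℝ
  | [] => 1
  | [_] => 1
  | a :: b :: l => p a b * pathProb p (b :: l)

def FirstHitPath {S : Type*} (x y : S) (γ : List S) : Prop :=
  γ.head? = some x ∧ γ.getLast? = some y ∧ 2 ≤ γ.length ∧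
    ∀ z ∈ (γ.drop 1).dropLast, z ≠ x ∧ z ≠ y

/-- `Pˣ(τ⁺_y < τ⁺_x)`. -/
noncomputable def hitBeforeReturn {S : Type*} (p : S → S → ℝ) (x y : S) : ℝ :=
  ∑' γ : {γ : List S // FirstHitPath x y γ}, pathProb p γ.1

/-- `Pˣ(τ_y < τ⁺_x)` (note `τ_y = 0` when started at `y`). -/
noncomputable def hitBefore {S : Type*} [DecidableEq S] (p : S → S → ℝ) (x y : S) : ℝ :=
  if x = y then 1 else hitBeforeReturn p x y

/-- The transition probability `p̃ x y = Pˣ(X_{τ⁺_{S̃}} = y)` of the chain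
induced on `S̃`: first positive return to `S̃` lands at `y`. -/
noncomputable def inducedTrans {S : Type*} (p : S → S → ℝ) (T : Set S)
    (a b : T) : ℝ :=
  ∑' γ : {γ : List S // γ.head? = some a.1 ∧ γ.getLast? = some b.1 ∧
      2 ≤ γ.length ∧ ∀ z ∈ (γ.drop 1).dropLast, z ∉ T},
    pathProb p γ.1

namespace IC
open scoped ENNReal NNReal

variable {S : Type*}

noncomputable def wt (q : S → S → ℝ≥0∞) : List S → ℝ≥0∞
  | [] => 1
  | [_] => 1
  | a :: b :: l => q a b * wt q (b :: l)

@[simp] lemma wt_nil (q : S → S → ℝ≥0∞) : wt q [] = 1 := rfl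
@[simp] lemma wt_single (q : S → S → ℝ≥0∞) (a : S) : wt q [a] = 1 := rfl
@[simp] lemma wt_cons_cons (q : S → S → ℝ≥0∞) (a b : S) (l : List S) :
    wt q (a :: b :: l) = q a b * wt q (b :: l) := rfl

lemma wt_congr {q q' : S → S → ℝ≥0∞} (h : ∀ x y, q x y = q' x y) :
    ∀ l : List S, wt q l = wt q' l
  | [] => rfl
  | [_] => rfl
  | a :: b :: l => by rw [wt_cons_cons, wt_cons_cons, h, wt_congr h (b :: l)]

lemma ofReal_pathProb {p : S → S → ℝ} (hp : ∀ x y, 0 ≤ p x y) :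
    ∀ l : List S, ENNReal.ofReal (pathProb p l) = wt (fun x y => ENNReal.ofReal (p x y)) l
  | [] => by simp [pathProb]
  | [a] => by simp [pathProb]
  | a :: b :: l => by
      rw [pathProb, wt_cons_cons, ENNReal.ofReal_mul (hp a b), ofReal_pathProb hp (b :: l)]

lemma pathProb_nonneg {p : S → S → ℝ} (hp : ∀ x y, 0 ≤ p x y) :
    ∀ l : List S, 0 ≤ pathProb p l
  | [] => zero_le_one
  | [_] => zero_le_one
  | a :: b :: l => mul_nonneg (hp a b) (pathProb_nonneg hp (b :: l))

/-- glue lemma -/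
lemma wt_append (q : S → S → ℝ≥0∞) :
    ∀ (l₁ : List S) (d : S) (l : List S), l₁.getLast? = some d →
      wt q (l₁ ++ l) = wt q l₁ * wt q (d :: l)
  | [], d, l, h => by simp at h
  | [x], d, l, h => by
      simp only [List.getLast?_singleton, Option.some.injEq] at h
      subst h; simp
  | x :: y :: l₁, d, l, h => by
      have h' : (y :: l₁).getLast? = some d := by
        simpa using h
      have := wt_append q (y :: l₁) d l h'
      simp only [List.cons_append, wt_cons_cons] at *
      rw [this, mul_assoc]

-- real/ennreal conversions
lemma summable_of_tsum_ofReal_ne_top {ι : Type*} {f : ι → ℝ} (h0 : ∀ i, 0 ≤ f i)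
    (h : ∑' i, ENNReal.ofReal (f i) ≠ ⊤) : Summable f := by
  set g : ι → ℝ≥0 := fun i => ⟨f i, h0 i⟩ with hg
  have hco : ∀ i, ENNReal.ofReal (f i) = (g i : ℝ≥0∞) := fun i => by
    rw [ENNReal.ofReal]; congr 1; ext; simp [hg, Real.coe_toNNReal _ (h0 i)]; rfl
  have : ∑' i, (g i : ℝ≥0∞) ≠ ⊤ := by simpa [hco] using h
  have hsg : Summable g := ENNReal.tsum_coe_ne_top_iff_summable.mp this
  have : Summable (fun i => (g i : ℝ)) := NNReal.summable_coe.mpr hsg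
  exact this

lemma tsum_toReal_ofReal {ι : Type*} {f : ι → ℝ} (h0 : ∀ i, 0 ≤ f i) :
    ∑' i, f i = (∑' i, ENNReal.ofReal (f i)).toReal := by
  by_cases hs : Summable f
  · rw [← ENNReal.ofReal_tsum_of_nonneg h0 hs, ENNReal.toReal_ofReal (tsum_nonneg h0)]
  · rw [tsum_eq_zero_of_not_summable hs]
    have : ∑' i, ENNReal.ofReal (f i) = ⊤ := by
      by_contra h
      exact hs (summable_of_tsum_ofReal_ne_top h0 h)
    rw [this, ENNReal.toReal_top]

lemma ofReal_tsum_of_ne_top {ι : Type*} {f : ι → ℝ} (h0 : ∀ i, 0 ≤ f i)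
    (h : ∑' i, ENNReal.ofReal (f i) ≠ ⊤) :
    ENNReal.ofReal (∑' i, f i) = ∑' i, ENNReal.ofReal (f i) :=
  ENNReal.ofReal_tsum_of_nonneg h0 (summable_of_tsum_ofReal_ne_top h0 h)

lemma tsum_subtype_congr {α : Type*} {P Q : α → Prop} (h : ∀ x, P x ↔ Q x) (f : α → ℝ≥0∞) :
    ∑' x : {x // P x}, f x.1 = ∑' x : {x // Q x}, f x.1 := by
  have hPQ : P = Q := funext fun x => propext (h x)
  subst hPQ; rfl

section Core
variable (q : S → S → ℝ≥0∞) (T : Set S) [DecidablePred (· ∈ T)] (a b : S)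

def cnt (γ : List S) : ℕ := (γ.drop 1).countP (fun z => decide (z ∈ T))

def GoodP' : Unit := ()

def GoodP (c : S) (γ : List S) : Prop :=
  γ.head? = some c ∧ γ.getLast? = some b ∧ 2 ≤ γ.length ∧
    ∀ z ∈ (γ.drop 1).dropLast, z ≠ a ∧ z ≠ b

def SegP (c d : S) (γ : List S) : Prop :=
  γ.head? = some c ∧ γ.getLast? = some d ∧ 2 ≤ γ.length ∧
    ∀ z ∈ (γ.drop 1).dropLast, z ∉ T

noncomputable def ind (c d : S) : ℝ≥0∞ := ∑' γ : {γ : List S // SegP T c d γ}, wt q γ.1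

noncomputable def phi (c : S) (n : ℕ) : ℝ≥0∞ :=
  ∑' γ : {γ : List S // GoodP a b c γ ∧ cnt T γ = n}, wt q γ.1

noncomputable def total (c : S) : ℝ≥0∞ := ∑' γ : {γ : List S // GoodP a b c γ}, wt q γ.1

lemma total_def (c : S) : total q a b c = ∑' γ : {γ : List S // GoodP a b c γ}, wt q γ.1 := rfl

variable {T a b}

lemma good_tail_ne_nil {c : S} {γ : List S} (h : GoodP a b c γ) : γ.tail ≠ [] := by
  obtain ⟨h1, h2, h3, h4⟩ := h
  intro hn
  cases γ with
  | nil => simp at h1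
  | cons x l => simp at hn; subst hn; simp at h3

lemma good_cnt_pos (hb : b ∈ T) {c : S} {γ : List S} (h : GoodP a b c γ) :
    0 < cnt T γ := by
  have ht := good_tail_ne_nil h
  obtain ⟨h1, h2, h3, h4⟩ := h
  rw [cnt, List.drop_one, List.countP_pos_iff]
  refine ⟨b, ?_, by simpa using hb⟩
  have : γ.tail.getLast? = some b := by
    cases γ with
    | nil => simp at h1
    | cons x l =>
      simp only [List.tail_cons] at ht ⊢
      cases l with
      | nil => simp at ht
      | cons y m => rw [List.getLast?_cons_cons] at h2; exact h2
  exact List.mem_of_mem_getLast? (by simp [this])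

lemma cnt_eq {γ : List S} {y : S} (h2 : γ.getLast? = some y) (h3 : 2 ≤ γ.length) :
    cnt T γ = ((γ.drop 1).dropLast).countP (fun z => decide (z ∈ T))
      + (if y ∈ T then 1 else 0) := by
  cases γ with
  | nil => simp at h3
  | cons x l =>
    cases l with
    | nil => simp at h3
    | cons u m =>
      rw [List.getLast?_cons_cons] at h2
      have hdecomp : (u :: m) = (u :: m).dropLast ++ [y] :=
        (List.dropLast_append_getLast? y h2).symm
      rw [cnt]
      simp only [List.drop_one, List.tail_cons]
      conv_lhs => rw [hdecomp]
      rw [List.countP_append]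
      by_cases hy : y ∈ T <;> simp [hy]

lemma phi_zero (hb : b ∈ T) (c : S) : phi q T a b c 0 = 0 := by
  have : IsEmpty {γ : List S // GoodP a b c γ ∧ cnt T γ = 0} := by
    constructor; rintro ⟨γ, hg, hc⟩
    exact absurd hc (by have := good_cnt_pos hb hg; omega)
  exact tsum_empty

lemma good_cnt_one_iff (ha : a ∈ T) (hb : b ∈ T) (c : S) (γ : List S) :
    (GoodP a b c γ ∧ cnt T γ = 1) ↔ SegP T c b γ := by
  constructor
  · rintro ⟨⟨h1, h2, h3, h4⟩, hc⟩
    refine ⟨h1, h2, h3, fun z hz => ?_⟩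
    rw [cnt_eq h2 h3, if_pos hb] at hc
    have h0 : ((γ.drop 1).dropLast).countP (fun z => decide (z ∈ T)) = 0 := by omega
    rw [List.countP_eq_zero] at h0
    simpa using h0 z hz
  · rintro ⟨h1, h2, h3, h4⟩
    refine ⟨⟨h1, h2, h3, fun z hz => ⟨?_, ?_⟩⟩, ?_⟩
    · rintro rfl; exact h4 z hz ha
    · rintro rfl; exact h4 z hz hb
    · rw [cnt_eq h2 h3, if_pos hb, List.countP_eq_zero.mpr]
      simp only [decide_eq_true_eq]
      exact h4

lemma phi_one (ha : a ∈ T) (hb : b ∈ T) (c : S) : phi q T a b c 1 = ind q T c b :=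
  (Equiv.subtypeEquivRight (good_cnt_one_iff ha hb c)).tsum_eq (fun γ => wt q γ.1)

lemma total_eq_tsum_phi (c : S) : total q a b c = ∑' n, phi q T a b c n := by
  let e : {γ : List S // GoodP a b c γ} ≃
      (Σ n : ℕ, {γ : List S // GoodP a b c γ ∧ cnt T γ = n}) :=
    { toFun := fun γ => ⟨cnt T γ.1, γ.1, γ.2, rfl⟩
      invFun := fun x => ⟨x.2.1, x.2.2.1⟩
      left_inv := fun γ => rfl
      right_inv := by rintro ⟨n, γ, h, rfl⟩; rfl }
  exact ((e.symm.tsum_eq (fun γ => wt q γ.1)).symm).trans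
    (ENNReal.tsum_sigma'
      (fun (x : Σ n : ℕ, {γ : List S // GoodP a b c γ ∧ cnt T γ = n}) => wt q x.2.1))

lemma segP_univ_iff (c d : S) (γ : List S) :
    SegP (Set.univ : Set S) c d γ ↔ γ = [c, d] := by
  constructor
  · rintro ⟨h1, h2, h3, h4⟩
    have hnil : (γ.drop 1).dropLast = [] :=
      List.eq_nil_iff_forall_not_mem.mpr fun z hz => (h4 z hz) (Set.mem_univ z)
    have hlen : γ.length = 2 := by
      have := congrArg List.length hnil
      simp [List.length_dropLast, List.length_drop] at this
      omega
    obtain ⟨x, y, rfl⟩ := List.length_eq_two.mp hlen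
    simp at h1 h2
    rw [h1, h2]
  · rintro rfl
    exact ⟨rfl, rfl, le_refl _, by simp⟩

lemma ind_univ (c d : S) :
    ind q (Set.univ : Set S) c d = q c d := by
  have h1 : ind q (Set.univ : Set S) c d = ∑' γ : {γ : List S // γ = [c, d]}, wt q γ.1 :=
    tsum_subtype_congr (segP_univ_iff c d) (wt q)
  rw [h1, tsum_eq_single (⟨[c,d], rfl⟩ : {γ : List S // γ = [c, d]})
    (by rintro ⟨γ, rfl⟩ hne; exact absurd rfl hne)]
  simp


lemma first_mem_split : ∀ (l : List S), 0 < l.countP (fun z => decide (z ∈ T)) →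
    ∃ s d t, l = s ++ d :: t ∧ (∀ z ∈ s, z ∉ T) ∧ d ∈ T
  | [], h => by simp at h
  | z :: l', h => by
    by_cases hz : z ∈ T
    · exact ⟨[], z, l', by simp, by simp, hz⟩
    · have hpos : 0 < l'.countP (fun z => decide (z ∈ T)) := by
        rw [List.countP_cons] at h; simpa [hz] using h
      obtain ⟨s, d, t, rfl, hs, hd⟩ := first_mem_split l' hpos
      refine ⟨z :: s, d, t, by simp, ?_, hd⟩
      rintro w hw
      rcases List.mem_cons.mp hw with rfl | hw
      · exact hz
      · exact hs w hw

lemma factor_unique : ∀ (s s' : List S) (d d' : S) (t t' : List S),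
    (∀ z ∈ s, z ∉ T) → (∀ z ∈ s', z ∉ T) → d ∈ T → d' ∈ T →
    s ++ d :: t = s' ++ d' :: t' → s = s' ∧ d = d' ∧ t = t'
  | [], [], d, d', t, t', _, _, _, _, h => by
      simp only [List.nil_append, List.cons.injEq] at h
      exact ⟨rfl, h.1, h.2⟩
  | [], z' :: s', d, d', t, t', hs, hs', hd, hd', h => by
      simp only [List.nil_append, List.cons_append, List.cons.injEq] at h
      obtain ⟨rfl, -⟩ := h
      exact absurd hd (hs' _ (by simp))
  | z :: s, [], d, d', t, t', hs, hs', hd, hd', h => by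
      simp only [List.nil_append, List.cons_append, List.cons.injEq] at h
      obtain ⟨rfl, -⟩ := h
      exact absurd hd' (hs _ (by simp))
  | z :: s, z' :: s', d, d', t, t', hs, hs', hd, hd', h => by
      simp only [List.cons_append, List.cons.injEq] at h
      obtain ⟨rfl, h⟩ := h
      obtain ⟨h1, h2, h3⟩ := factor_unique s s' d d' t t'
        (fun w hw => hs w (by simp [hw])) (fun w hw => hs' w (by simp [hw])) hd hd' h
      exact ⟨by rw [h1], h2, h3⟩

lemma segP_shape {c d : S} {s : List S} (h : SegP T c d s) :
    ∃ w, s = c :: (w ++ [d]) ∧ ∀ z ∈ w, z ∉ T := by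
  obtain ⟨h1, h2, h3, h4⟩ := h
  cases s with
  | nil => simp at h1
  | cons x s₀ =>
    have hx : x = c := by simpa using h1
    subst hx
    have hs₀ : s₀ ≠ [] := by intro hh; subst hh; simp at h3
    have hlast : s₀.getLast? = some d := by
      rw [List.getLast?_cons] at h2
      cases hgl : s₀.getLast? with
      | none => exact absurd (List.getLast?_eq_none_iff.mp hgl) hs₀
      | some w => rw [hgl] at h2; simpa using h2
    refine ⟨s₀.dropLast, ?_, ?_⟩
    · rw [List.dropLast_append_getLast? d hlast]
    · intro z hz
      exact h4 z (by simpa using hz)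

lemma good_shape {d : S} {γ : List S} (h : GoodP a b d γ) :
    ∃ t, γ = d :: t ∧ t ≠ [] := by
  obtain ⟨h1, h2, h3, h4⟩ := h
  cases γ with
  | nil => simp at h1
  | cons x t =>
    have hx : x = d := by simpa using h1
    subst hx
    refine ⟨t, rfl, ?_⟩
    intro hh; subst hh; simp at h3

lemma getLast?_tail_of_cons {d bb : S} {t : List S} (ht : t ≠ [])
    (h : (d :: t).getLast? = some bb) : t.getLast? = some bb := by
  rw [List.getLast?_cons] at h
  cases hgl : t.getLast? with
  | none => exact absurd (List.getLast?_eq_none_iff.mp hgl) ht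
  | some w => rw [hgl] at h; simpa using h

lemma glue_mem (ha : a ∈ T) (hb : b ∈ T) {c d : S} (hd : d ∈ T) (hda : d ≠ a) (hdb : d ≠ b)
    {s γ' : List S} (hs : SegP T c d s) (hγ : GoodP a b d γ') {m : ℕ} (hcγ : cnt T γ' = m) :
    GoodP a b c (s ++ γ'.tail) ∧ cnt T (s ++ γ'.tail) = m + 1 ∧
      wt q (s ++ γ'.tail) = wt q s * wt q γ' := by
  obtain ⟨w, rfl, hw⟩ := segP_shape hs
  obtain ⟨t, rfl, ht⟩ := good_shape hγ
  have hglue : (c :: (w ++ [d])) ++ (d :: t).tail = c :: (w ++ d :: t) := by simp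
  have htb : t.getLast? = some b := getLast?_tail_of_cons ht hγ.2.1
  have hwt : wt q ((c :: (w ++ [d])) ++ (d :: t).tail) =
      wt q (c :: (w ++ [d])) * wt q (d :: t) := by
    rw [List.tail_cons]
    exact wt_append q (c :: (w ++ [d])) d t hs.2.1
  refine ⟨⟨?_, ?_, ?_, ?_⟩, ?_, hwt⟩
  · rw [hglue]; rfl
  · rw [hglue]
    have : (c :: (w ++ d :: t)) = (c :: w) ++ (d :: t) := by simp
    rw [this, List.getLast?_append]
    have : (d :: t).getLast? = some b := hγ.2.1
    rw [this]; rfl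
  · rw [hglue]; simp; omega
  · rw [hglue]
    intro z hz
    have hz' : z ∈ w ++ d :: t.dropLast := by
      have h1 : ((c :: (w ++ d :: t)).drop 1).dropLast = w ++ (d :: t).dropLast := by
        rw [List.drop_one, List.tail_cons, List.dropLast_append_cons]
      have h2 : (d :: t).dropLast = d :: t.dropLast := List.dropLast_cons_of_ne_nil ht
      rw [h1, h2] at hz
      exact hz
    rcases List.mem_append.mp hz' with hzw | hzdt
    · have hzT := hw z hzw
      exact ⟨fun hza => hzT (hza ▸ ha), fun hzb => hzT (hzb ▸ hb)⟩
    · rcases List.mem_cons.mp hzdt with rfl | hzt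
      · exact ⟨hda, hdb⟩
      · exact hγ.2.2.2 z (by simpa using hzt)
  · rw [hglue, cnt]
    simp only [List.drop_one, List.tail_cons]
    rw [List.countP_append, List.countP_cons]
    have hw0 : w.countP (fun z => decide (z ∈ T)) = 0 :=
      List.countP_eq_zero.mpr (by intro z hz; simpa using hw z hz)
    have hct : t.countP (fun z => decide (z ∈ T)) = m := by
      rw [cnt] at hcγ
      simpa using hcγ
    simp [hw0, hct, hd]

lemma good_split {c : S} {γ : List S} {n : ℕ} (ha : a ∈ T) (hb : b ∈ T)
    (hg : GoodP a b c γ) (hc : cnt T γ = n + 2) :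
    ∃ (d : S) (s γ' : List S), d ∈ T ∧ d ≠ a ∧ d ≠ b ∧ SegP T c d s ∧ GoodP a b d γ' ∧
      cnt T γ' = n + 1 ∧ γ = s ++ γ'.tail := by
  obtain ⟨h1, h2, h3, h4⟩ := hg
  cases γ with
  | nil => simp at h1
  | cons x r =>
    have hx : x = c := by simpa using h1
    subst hx
    have hcr : r.countP (fun z => decide (z ∈ T)) = n + 2 := by
      rw [cnt] at hc; simpa using hc
    obtain ⟨s₁, d, t, rfl, hs₁, hd⟩ := first_mem_split r (by rw [hcr]; omega)
    have hs₁0 : s₁.countP (fun z => decide (z ∈ T)) = 0 :=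
      List.countP_eq_zero.mpr (by intro z hz; simpa using hs₁ z hz)
    have hct : t.countP (fun z => decide (z ∈ T)) = n + 1 := by
      rw [List.countP_append, List.countP_cons] at hcr
      simp [hs₁0, hd] at hcr
      omega
    have ht : t ≠ [] := by
      intro hh; subst hh; simp at hct
    have hlast : (d :: t).getLast? = some b := by
      have : (x :: (s₁ ++ d :: t)) = (x :: s₁) ++ (d :: t) := by simp
      rw [this, List.getLast?_append] at h2
      cases hgl : (d :: t).getLast? with
      | none => simp at hgl
      | some w => rw [hgl] at h2; simpa using h2
    have hint : ((x :: (s₁ ++ d :: t)).drop 1).dropLast = s₁ ++ d :: t.dropLast := by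
      rw [List.drop_one, List.tail_cons, List.dropLast_append_cons,
        List.dropLast_cons_of_ne_nil ht]
    have hdab : d ≠ a ∧ d ≠ b := by
      apply h4
      rw [hint]
      exact List.mem_append.mpr (Or.inr List.mem_cons_self)
    refine ⟨d, x :: (s₁ ++ [d]), d :: t, hd, hdab.1, hdab.2, ?_, ?_, ?_, by simp⟩
    · refine ⟨rfl, ?_, by simp, ?_⟩
      · have : (x :: (s₁ ++ [d])) = (x :: s₁) ++ [d] := by simp
        rw [this, List.getLast?_append]
        simp
      · intro z hz
        have : z ∈ s₁ := by
          have h5 : ((x :: (s₁ ++ [d])).drop 1).dropLast = s₁ := by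
            rw [List.drop_one, List.tail_cons, List.dropLast_concat]
          rwa [h5] at hz
        exact hs₁ z this
    · refine ⟨rfl, hlast, ?_, ?_⟩
      · cases t with
        | nil => exact absurd rfl ht
        | cons u m => simp
      · intro z hz
        have hz' : z ∈ t.dropLast := by simpa using hz
        apply h4
        rw [hint]
        exact List.mem_append.mpr (Or.inr (List.mem_cons_of_mem d hz'))
    · rw [cnt]
      simpa using hct



lemma phi_step (ha : a ∈ T) (hb : b ∈ T) (c : S) (n : ℕ) :
    phi q T a b c (n + 2) =
      ∑' d : {d : S // d ∈ T ∧ d ≠ a ∧ d ≠ b}, ind q T c d.1 * phi q T a b d.1 (n + 1) := by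
  let g : (Σ d : {d : S // d ∈ T ∧ d ≠ a ∧ d ≠ b}, {s : List S // SegP T c d.1 s} ×
      {γ' : List S // GoodP a b d.1 γ' ∧ cnt T γ' = n + 1}) →
      {γ : List S // GoodP a b c γ ∧ cnt T γ = n + 2} :=
    fun x =>
      ⟨x.2.1.1 ++ x.2.2.1.tail, by
        obtain ⟨⟨d, hd, hda, hdb⟩, ⟨s, hs⟩, ⟨γ', hγ', hcγ'⟩⟩ := x
        have h := glue_mem (q := q) ha hb hd hda hdb hs hγ' hcγ'
        exact ⟨h.1, h.2.1⟩⟩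
  have hbij : Function.Bijective g := by
    constructor
    · rintro ⟨⟨d, hd, hda, hdb⟩, ⟨s, hs⟩, ⟨γ', hγ', hcγ'⟩⟩
        ⟨⟨d', hd', hda', hdb'⟩, ⟨s', hs'⟩, ⟨γ'', hγ'', hcγ''⟩⟩ heq
      have hval : s ++ γ'.tail = s' ++ γ''.tail := congrArg Subtype.val heq
      obtain ⟨w, rfl, hw⟩ := segP_shape hs
      obtain ⟨w', rfl, hw'⟩ := segP_shape hs'
      obtain ⟨t, rfl, ht⟩ := good_shape hγ'
      obtain ⟨t', rfl, ht'⟩ := good_shape hγ''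
      have hval' : w ++ d :: t = w' ++ d' :: t' := by
        simpa using hval
      obtain ⟨rfl, rfl, rfl⟩ := factor_unique w w' d d' t t' hw hw' hd hd' hval'
      rfl
    · rintro ⟨γ, hg, hc⟩
      obtain ⟨d, s, γ', hd, hda, hdb, hs, hγ', hcγ', rfl⟩ := good_split ha hb hg hc
      exact ⟨⟨⟨d, hd, hda, hdb⟩, ⟨s, hs⟩, ⟨γ', hγ', hcγ'⟩⟩, rfl⟩
  calc phi q T a b c (n + 2)
      = ∑' x : (Σ d : {d : S // d ∈ T ∧ d ≠ a ∧ d ≠ b}, {s : List S // SegP T c d.1 s} ×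
          {γ' : List S // GoodP a b d.1 γ' ∧ cnt T γ' = n + 1}), wt q (g x).1 :=
        ((Equiv.ofBijective g hbij).tsum_eq (fun γ => wt q γ.1)).symm
    _ = ∑' x : (Σ d : {d : S // d ∈ T ∧ d ≠ a ∧ d ≠ b}, {s : List S // SegP T c d.1 s} ×
          {γ' : List S // GoodP a b d.1 γ' ∧ cnt T γ' = n + 1}), wt q x.2.1.1 * wt q x.2.2.1 := by
        refine tsum_congr ?_
        rintro ⟨⟨d, hd, hda, hdb⟩, ⟨s, hs⟩, ⟨γ', hγ', hcγ'⟩⟩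
        exact (glue_mem (q := q) ha hb hd hda hdb hs hγ' hcγ').2.2
    _ = ∑' d : {d : S // d ∈ T ∧ d ≠ a ∧ d ≠ b},
          ∑' x : ({s : List S // SegP T c d.1 s} ×
            {γ' : List S // GoodP a b d.1 γ' ∧ cnt T γ' = n + 1}), wt q x.1.1 * wt q x.2.1 :=
        ENNReal.tsum_sigma' _
    _ = ∑' d : {d : S // d ∈ T ∧ d ≠ a ∧ d ≠ b}, ind q T c d.1 * phi q T a b d.1 (n + 1) := by
        refine tsum_congr fun d => ?_
        calc ∑' x : ({s : List S // SegP T c d.1 s} ×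
              {γ' : List S // GoodP a b d.1 γ' ∧ cnt T γ' = n + 1}), wt q x.1.1 * wt q x.2.1
            = ∑' s : {s : List S // SegP T c d.1 s},
                ∑' γ' : {γ' : List S // GoodP a b d.1 γ' ∧ cnt T γ' = n + 1},
                  wt q s.1 * wt q γ'.1 := ENNReal.tsum_prod'
          _ = ∑' s : {s : List S // SegP T c d.1 s},
                wt q s.1 * phi q T a b d.1 (n + 1) := tsum_congr fun s => ENNReal.tsum_mul_left
          _ = ind q T c d.1 * phi q T a b d.1 (n + 1) := ENNReal.tsum_mul_right



instance : ∀ (x : S), Decidable (x ∈ (Set.univ : Set S)) := fun _ => isTrue trivial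

lemma phi_transfer (ha : a ∈ T) (hb : b ∈ T) :
    ∀ (n : ℕ) (c : S) (hc : c ∈ T),
      phi q T a b c n =
        phi (fun d e : T => ind q T d.1 e.1) (Set.univ : Set T) ⟨a, ha⟩ ⟨b, hb⟩ ⟨c, hc⟩ n := by
  intro n
  induction n using Nat.strong_induction_on with
  | _ n ih =>
    match n with
    | 0 => intro c hc; rw [phi_zero q hb, phi_zero _ (Set.mem_univ _)]
    | 1 =>
      intro c hc
      rw [phi_one q ha hb, phi_one _ (Set.mem_univ _) (Set.mem_univ _), ind_univ]
    | (n + 2) =>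
      intro c hc
      rw [phi_step q ha hb, phi_step _ (Set.mem_univ _) (Set.mem_univ _)]
      let E : {d : S // d ∈ T ∧ d ≠ a ∧ d ≠ b} ≃
          {e : T // e ∈ (Set.univ : Set T) ∧ e ≠ ⟨a, ha⟩ ∧ e ≠ ⟨b, hb⟩} :=
        { toFun := fun d => ⟨⟨d.1, d.2.1⟩, trivial,
            fun h => d.2.2.1 (congrArg Subtype.val h),
            fun h => d.2.2.2 (congrArg Subtype.val h)⟩
          invFun := fun e => ⟨e.1.1, e.1.2,
            fun h => e.2.2.1 (Subtype.ext h),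
            fun h => e.2.2.2 (Subtype.ext h)⟩
          left_inv := fun d => rfl
          right_inv := fun e => rfl }
      rw [← E.tsum_eq (fun e => ind (fun d e : T => ind q T d.1 e.1) (Set.univ : Set T)
        ⟨c, hc⟩ e.1 * phi (fun d e : T => ind q T d.1 e.1) (Set.univ : Set T)
        ⟨a, ha⟩ ⟨b, hb⟩ e.1 (n + 1))]
      refine tsum_congr fun d => ?_
      rw [ind_univ]
      have h1 : ind q T c d.1 = ind q T (⟨c, hc⟩ : T).1 ((E d).1 : T).1 := rfl
      rw [← h1, ih (n + 1) (by omega) d.1 d.2.1]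
      rfl

lemma total_transfer (ha : a ∈ T) (hb : b ∈ T) {c : S} (hc : c ∈ T) :
    total q a b c =
      total (fun d e : T => ind q T d.1 e.1) ⟨a, ha⟩ ⟨b, hb⟩ ⟨c, hc⟩ := by
  rw [total_eq_tsum_phi q (T := T), total_eq_tsum_phi _ (T := (Set.univ : Set T))]
  exact tsum_congr fun n => phi_transfer q ha hb n c hc



lemma eq_cons_head_tail {γ : List S} {c : S} (h : γ.head? = some c) : γ = c :: γ.tail := by
  cases γ with
  | nil => simp at h
  | cons x t => simp only [List.head?_cons, Option.some.injEq] at h; subst h; rfl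

lemma sum_wt_le_one [Fintype S] [DecidableEq S] (hrow : ∀ x, ∑ y, q x y = 1) :
    ∀ (N : ℕ) (c : S) (F : Finset (List S)),
      (∀ γ ∈ F, γ.head? = some c) → (∀ γ ∈ F, γ.length ≤ N) →
      (∀ γ₁ ∈ F, ∀ γ₂ ∈ F, γ₁ <+: γ₂ → γ₁ = γ₂) →
      ∑ γ ∈ F, wt q γ ≤ 1 := by
  intro N
  induction N with
  | zero =>
    intro c F hhead hlen hpf
    have : F = ∅ := by
      refine Finset.eq_empty_of_forall_notMem fun γ hγ => ?_
      have h1 := hhead γ hγ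
      have h2 := hlen γ hγ
      cases γ with
      | nil => simp at h1
      | cons x t => simp at h2
    simp [this]
  | succ N ihN =>
    intro c F hhead hlen hpf
    by_cases hc : [c] ∈ F
    · have hF : F = {[c]} := by
        rw [Finset.eq_singleton_iff_unique_mem]
        refine ⟨hc, fun γ hγ => ?_⟩
        exact (hpf [c] hc γ hγ ⟨γ.tail, (eq_cons_head_tail (hhead γ hγ)).symm⟩).symm
      simp [hF]
    · -- every path has length ≥ 2
      have hlen2 : ∀ γ ∈ F, 2 ≤ γ.length := by
        intro γ hγ
        have h1 := hhead γ hγ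
        rcases γ with _ | ⟨x, _ | ⟨y, t⟩⟩
        · simp at h1
        · simp only [List.head?_cons, Option.some.injEq] at h1
          exact absurd (h1 ▸ hγ) hc
        · simp
      -- fiberwise over second entry
      have key : ∀ d : S, ∑ γ ∈ F.filter (fun γ => γ.tail.head? = some d), wt q γ ≤ q c d := by
        intro d
        set Fd := F.filter (fun γ => γ.tail.head? = some d) with hFd
        have hmem : ∀ γ ∈ Fd, γ = c :: d :: γ.tail.tail := by
          intro γ hγ
          obtain ⟨hγF, hγd⟩ := Finset.mem_filter.mp hγ
          have h1 := eq_cons_head_tail (hhead γ hγF)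
          have h2 := eq_cons_head_tail (hγd : γ.tail.head? = some d)
          exact h1.trans (congrArg (c :: ·) h2)
        have hsum : ∑ γ ∈ Fd, wt q γ = q c d * ∑ γ ∈ Fd, wt q γ.tail := by
          rw [Finset.mul_sum]
          refine Finset.sum_congr rfl fun γ hγ => ?_
          conv_lhs => rw [hmem γ hγ]
          have h2 : γ.tail = d :: γ.tail.tail := by
            obtain ⟨hγF, hγd⟩ := Finset.mem_filter.mp hγ
            exact eq_cons_head_tail hγd
          rw [wt_cons_cons, ← h2]
        have himg : ∑ γ ∈ Fd, wt q γ.tail = ∑ l ∈ Fd.image List.tail, wt q l := by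
          rw [Finset.sum_image]
          intro γ₁ h₁ γ₂ h₂ hteq
          rw [hmem γ₁ h₁, hmem γ₂ h₂]
          have e1 : γ₁.tail = d :: γ₁.tail.tail := eq_cons_head_tail (Finset.mem_filter.mp h₁).2
          have e2 : γ₂.tail = d :: γ₂.tail.tail := eq_cons_head_tail (Finset.mem_filter.mp h₂).2
          rw [← e1, ← e2, hteq]
        have hbound : ∑ l ∈ Fd.image List.tail, wt q l ≤ 1 := by
          refine ihN d (Fd.image List.tail) ?_ ?_ ?_
          · intro l hl
            obtain ⟨γ, hγ, rfl⟩ := Finset.mem_image.mp hl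
            rw [(Finset.mem_filter.mp hγ).2]
          · intro l hl
            obtain ⟨γ, hγ, rfl⟩ := Finset.mem_image.mp hl
            have := hlen γ (Finset.mem_filter.mp hγ).1
            cases γ with
            | nil => simp
            | cons x t => simp at this ⊢; omega
          · intro l₁ hl₁ l₂ hl₂ hpre
            obtain ⟨γ₁, hγ₁, rfl⟩ := Finset.mem_image.mp hl₁
            obtain ⟨γ₂, hγ₂, rfl⟩ := Finset.mem_image.mp hl₂
            have hγ₁F := (Finset.mem_filter.mp hγ₁).1
            have hγ₂F := (Finset.mem_filter.mp hγ₂).1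
            have hpre' : γ₁ <+: γ₂ := by
              rw [eq_cons_head_tail (hhead γ₁ hγ₁F), eq_cons_head_tail (hhead γ₂ hγ₂F)]
              exact (List.cons_prefix_cons).mpr ⟨rfl, hpre⟩
            rw [hpf γ₁ hγ₁F γ₂ hγ₂F hpre']
        calc ∑ γ ∈ Fd, wt q γ = q c d * ∑ l ∈ Fd.image List.tail, wt q l := by
              rw [hsum, himg]
          _ ≤ q c d * 1 := mul_le_mul_right hbound _
          _ = q c d := mul_one _
      -- combine fibers
      calc ∑ γ ∈ F, wt q γ
          = ∑ o : Option S, ∑ γ ∈ F.filter (fun γ => γ.tail.head? = o), wt q γ :=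
            (Finset.sum_fiberwise F (fun γ => γ.tail.head?) (wt q)).symm
        _ ≤ ∑ o : Option S, Option.elim o 0 (q c) := by
            refine Finset.sum_le_sum fun o _ => ?_
            cases o with
            | none =>
              have hemp : F.filter (fun γ => γ.tail.head? = none) = ∅ := by
                refine Finset.eq_empty_of_forall_notMem fun γ hγ => ?_
                obtain ⟨hγF, hγn⟩ := Finset.mem_filter.mp hγ
                have h2 := hlen2 γ hγF
                rcases γ with _ | ⟨x, _ | ⟨y, t⟩⟩
                · simp at h2
                · simp at h2
                · simp at hγn
              rw [hemp]
              simp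
            | some d => simpa using key d
        _ = 1 := by rw [Fintype.sum_option]; simpa using hrow c



lemma seg_prefix_free {c d : S} (hd : d ∈ T) {γ₁ γ₂ : List S}
    (h₁ : SegP T c d γ₁) (h₂ : SegP T c d γ₂) (hp : γ₁ <+: γ₂) : γ₁ = γ₂ := by
  obtain ⟨u, hu⟩ := hp
  cases u with
  | nil => rw [← hu]; simp
  | cons z u' =>
    exfalso
    obtain ⟨w, rfl, hw⟩ := segP_shape h₁
    have hγ₂ : γ₂ = c :: (w ++ d :: z :: u') := by rw [← hu]; simp
    have hdint : d ∈ (γ₂.drop 1).dropLast := by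
      rw [hγ₂, List.drop_one, List.tail_cons, List.dropLast_append_cons]
      exact List.mem_append.mpr (Or.inr (by simp))
    exact h₂.2.2.2 d hdint hd

lemma ind_le_one [Fintype S] [DecidableEq S] (hrow : ∀ x, ∑ y, q x y = 1)
    {c d : S} (hd : d ∈ T) : ind q T c d ≤ 1 := by
  rw [ind, ENNReal.tsum_eq_iSup_sum]
  refine iSup_le fun F => ?_
  have himg : ∑ γ ∈ F, wt q γ.1 = ∑ l ∈ F.image Subtype.val, wt q l :=
    (Finset.sum_image (by intro x hx y hy h; exact Subtype.ext h)).symm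
  rw [himg]
  refine sum_wt_le_one q hrow ((F.image Subtype.val).sup List.length) c _ ?_ ?_ ?_
  · intro γ hγ
    obtain ⟨⟨γ', hs⟩, -, rfl⟩ := Finset.mem_image.mp hγ
    exact hs.1
  · intro γ hγ
    exact Finset.le_sup (f := List.length) hγ
  · intro γ₁ h₁ γ₂ h₂ hp
    obtain ⟨⟨γ₁', hs₁⟩, -, rfl⟩ := Finset.mem_image.mp h₁
    obtain ⟨⟨γ₂', hs₂⟩, -, rfl⟩ := Finset.mem_image.mp h₂
    exact seg_prefix_free hd hs₁ hs₂ hp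


end Core
end IC

open scoped ENNReal in
theorem induced_chain_preserves_hitting
    {S : Type*} [Fintype S] [DecidableEq S]
    (p : S → S → ℝ) (hp : ∀ x y, 0 ≤ p x y) (hrow : ∀ x, ∑ y, p x y = 1)
    (T : Set S) [DecidablePred (· ∈ T)]
    (hwd : ∀ a : T, ∑ b : T, inducedTrans p T a b = 1) :
    ∀ a b : T, hitBefore p a.1 b.1 = hitBefore (inducedTrans p T) a b := by
  intro a b
  classical
  by_cases hab : a = b
  · subst hab
    simp [hitBefore]
  · have hab1 : a.1 ≠ b.1 := fun h => hab (Subtype.ext h)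
    simp only [hitBefore, if_neg hab1, if_neg hab]
    set qE : S → S → ℝ≥0∞ := fun x y => ENNReal.ofReal (p x y) with hqE
    have hrowE : ∀ x, ∑ y, qE x y = 1 := by
      intro x
      rw [hqE, ← ENNReal.ofReal_sum_of_nonneg (fun y _ => hp x y), hrow x, ENNReal.ofReal_one]
    set qB : T → T → ℝ≥0∞ := fun d e => IC.ind qE T d.1 e.1 with hqB
    have hentry : ∀ c d : T, ENNReal.ofReal (inducedTrans p T c d) = qB c d := by
      intro c d
      have h1 : ∀ γ : {γ : List S // IC.SegP T c.1 d.1 γ}, 0 ≤ pathProb p γ.1 :=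
        fun γ => IC.pathProb_nonneg hp γ.1
      have h2 : ∑' γ : {γ : List S // IC.SegP T c.1 d.1 γ}, ENNReal.ofReal (pathProb p γ.1)
          = IC.ind qE T c.1 d.1 := tsum_congr fun γ => IC.ofReal_pathProb hp γ.1
      have h3 : inducedTrans p T c d
          = ∑' γ : {γ : List S // IC.SegP T c.1 d.1 γ}, pathProb p γ.1 := rfl
      have hfin : ∑' γ : {γ : List S // IC.SegP T c.1 d.1 γ},
          ENNReal.ofReal (pathProb p γ.1) ≠ ⊤ := by
        rw [h2]
        exact ne_top_of_le_ne_top ENNReal.one_ne_top (IC.ind_le_one qE hrowE d.2)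
      rw [h3, IC.ofReal_tsum_of_ne_top h1 hfin, h2]
    have hA : hitBeforeReturn p a.1 b.1 = (IC.total qE a.1 b.1 a.1).toReal := by
      rw [hitBeforeReturn, IC.tsum_toReal_ofReal
        (fun γ : {γ : List S // FirstHitPath a.1 b.1 γ} => IC.pathProb_nonneg hp γ.1)]
      congr 1
      rw [show IC.total qE a.1 b.1 a.1
        = ∑' γ : {γ : List S // FirstHitPath a.1 b.1 γ}, IC.wt qE γ.1 from rfl]
      exact tsum_congr fun γ => IC.ofReal_pathProb hp γ.1
    have hpB : ∀ c d : T, 0 ≤ inducedTrans p T c d :=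
      fun c d => tsum_nonneg (fun γ => IC.pathProb_nonneg hp γ.1)
    have hB : hitBeforeReturn (inducedTrans p T) a b = (IC.total qB a b a).toReal := by
      rw [hitBeforeReturn, IC.tsum_toReal_ofReal
        (fun δ : {δ : List T // FirstHitPath a b δ} => IC.pathProb_nonneg hpB δ.1)]
      congr 1
      rw [show IC.total qB a b a
        = ∑' δ : {δ : List T // FirstHitPath a b δ}, IC.wt qB δ.1 from rfl]
      exact tsum_congr fun δ => (IC.ofReal_pathProb hpB δ.1).trans (IC.wt_congr hentry δ.1)
    rw [hA, hB]
    exact congrArg ENNReal.toReal (IC.total_transfer qE a.2 b.2 a.2)
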